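/- (Necessity in the homogeneous case.) Assume the system is homogeneous: all single-variable beliefs b_i are equal to a common strictly positive probability vector β on {1,…,q}, and there is a single q×q row-stochastic matrix B with B^{(iaj)} = B for all triples (i,a,j) with i ≠ j in a, where B is reversible with respect to β (β_k B_{kl} = β_l B_{lk} for all k,l). Let λ₁ be the spectral radius of A and μ₂ = √(μ₂^{(iaj)}) (the same for all triples). If every complex eigenvalue of J̃ has modulus strictly less than 1 (local stability), then λ₁·μ₂ ≤ 1; i.e., λ₁μ₂ ≤ 1 is a necessary condition for local stability. -/

import Mathlib

open Finset

variable {V F : Type*} [Fintype V] [DecidableEq V] [Fintype F] [DecidableEq F]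

/-- Configurations on the factor `a`: tuples `x_a ∈ {1,…,q}^a`. -/
abbrev Config (S : F → Finset V) (q : ℕ) (a : F) := {i : V // i ∈ S a} → Fin q

/-- The conditional-belief matrix `B^{(iaj)}`, with entries
`B^{(iaj)}_{kl} = (1/b_i(k)) Σ_{x_a : x_i = k, x_j = l} b_a(x_a)`. -/
noncomputable def Bmat (S : F → Finset V) {q : ℕ} (bv : V → Fin q → ℝ)
    (bf : ∀ a : F, Config S q a → ℝ) (a : F) (i j : V) :
    Matrix (Fin q) (Fin q) ℝ :=
  Matrix.of fun k l => (1 / bv i k) *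
    ∑ y ∈ univ.filter (fun y : Config S q a =>
        ∀ v : {v : V // v ∈ S a}, (v.1 = i → y v = k) ∧ (v.1 = j → y v = l)),
      bf a y

/-- The combined stochastic kernel `K^{(iaj)} = B^{(iaj)} B^{(jai)}`. -/
noncomputable def Kmat (S : F → Finset V) {q : ℕ} (bv : V → Fin q → ℝ)
    (bf : ∀ a : F, Config S q a → ℝ) (a : F) (i j : V) :
    Matrix (Fin q) (Fin q) ℝ :=
  Bmat S bv bf a i j * Bmat S bv bf a j i

/-- `μ₂^{(iaj)}`: the second eigenvalue of `K^{(iaj)}`, as the supremum of the Rayleigh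
quotient over nonzero vectors with zero `b_i`-mean. -/
noncomputable def mu2 (S : F → Finset V) {q : ℕ} (bv : V → Fin q → ℝ)
    (bf : ∀ a : F, Config S q a → ℝ) (a : F) (i j : V) : ℝ :=
  sSup {r : ℝ | ∃ x : Fin q → ℝ, x ≠ 0 ∧ (∑ k, x k * bv i k) = 0 ∧
    r = (∑ k, ∑ l, x k * x l * Kmat S bv bf a i j k l * bv i k) /
        (∑ k, x k ^ 2 * bv i k)}

/-- The 0-1 adjacency matrix `A` of the oriented line graph `L(G)`:
`A_{(a,i),(a',j)} = 1` iff `j ∈ a ∩ a'`, `j ≠ i` and `a' ≠ a`. -/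
noncomputable def Amat (S : F → Finset V) : Matrix (F × V) (F × V) ℝ :=
  Matrix.of fun e e' =>
    if e'.2 ∈ S e.1 ∧ e'.2 ∈ S e'.1 ∧ e'.2 ≠ e.2 ∧ e'.1 ≠ e.1 then 1 else 0

/-- Directed paths of length `n` from `e` to `e'` in the oriented line graph. -/
def pathSet (S : F → Finset V) (n : ℕ) (e e' : F × V) :
    Finset (Fin (n + 1) → F × V) :=
  univ.filter (fun γ => γ 0 = e ∧ γ (Fin.last n) = e' ∧
    ∀ t : Fin n,
      (γ t.succ).2 ∈ S (γ t.castSucc).1 ∧ (γ t.succ).2 ∈ S (γ t.succ).1 ∧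
      (γ t.succ).2 ≠ (γ t.castSucc).2 ∧ (γ t.succ).1 ≠ (γ t.castSucc).1)

/-- The stochastic kernel of a path: `B^γ = B^{(i_0 a_0 i_1)} ⋯ B^{(i_{n-1} a_{n-1} i_n)}`. -/
noncomputable def pathKernel (S : F → Finset V) {q : ℕ} (bv : V → Fin q → ℝ)
    (bf : ∀ a : F, Config S q a → ℝ) {n : ℕ} (γ : Fin (n + 1) → F × V) :
    Matrix (Fin q) (Fin q) ℝ :=
  (List.ofFn fun t : Fin n =>
    Bmat S bv bf (γ t.castSucc).1 (γ t.castSucc).2 (γ t.succ).2).prod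

/-- `μ₂ = max_{(iaj)} √(μ₂^{(iaj)})`, the maximum over all triples `(i,a,j)` with
`i ≠ j` both in `a`. -/
noncomputable def mu2max (S : F → Finset V) {q : ℕ} (bv : V → Fin q → ℝ)
    (bf : ∀ a : F, Config S q a → ℝ) : ℝ :=
  sSup {r : ℝ | ∃ (a : F) (i j : V), i ∈ S a ∧ j ∈ S a ∧ i ≠ j ∧
    r = Real.sqrt (mu2 S bv bf a i j)}

/-- The Jacobian `J̃` of the message-normalized BP update at the fixed point with beliefs
`(b_i, b_a)` (for `φ_i = b_i`, `ψ_a = b_a/∏_{i∈a} b_i`, messages ≡ 1):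
`J̃_{(a,i,k),(a',j,l)} = (B^{(iaj)}_{kl} − (1/q) Σ_x B^{(iaj)}_{xl}) A_{(a,i),(a',j)}`. -/
noncomputable def Jtilde (S : F → Finset V) {q : ℕ} (bv : V → Fin q → ℝ)
    (bf : ∀ a : F, Config S q a → ℝ) :
    Matrix ((F × V) × Fin q) ((F × V) × Fin q) ℝ :=
  Matrix.of fun p p' =>
    (Bmat S bv bf p.1.1 p.1.2 p'.1.2 p.2 p'.2
        - (1 / (q : ℝ)) * ∑ x : Fin q, Bmat S bv bf p.1.1 p.1.2 p'.1.2 x p'.2) *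
      Amat S p.1 p'.1

/-- `μ` is a (complex) eigenvalue of the real square matrix `M`. -/
def IsEigenvalue {n : Type*} [Fintype n] [DecidableEq n]
    (M : Matrix n n ℝ) (μ : ℂ) : Prop :=
  ∃ v : n → ℂ, v ≠ 0 ∧ (M.map (fun t : ℝ => (t : ℂ))).mulVec v = μ • v

/-- The spectral radius of a real square matrix: the supremum of the moduli of its
complex eigenvalues. -/
noncomputable def specRad {n : Type*} [Fintype n] [DecidableEq n]
    (M : Matrix n n ℝ) : ℝ :=
  sSup {r : ℝ | ∃ μ : ℂ, IsEigenvalue M μ ∧ r = ‖μ‖}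


lemma exists_eigen_P (q : ℕ) (hq : 2 ≤ q) (β : Fin q → ℝ) (hβpos : ∀ k, 0 < β k)
    (hβsum : ∑ k, β k = 1)
    (B₀ : Matrix (Fin q) (Fin q) ℝ) (hB₀stoch : ∀ k, ∑ l, B₀ k l = 1)
    (hB₀rev : ∀ k l, β k * B₀ k l = β l * B₀ l k) :
    ∃ (ν : ℝ) (z : Fin q → ℝ), z ≠ 0 ∧
      (∀ k, ∑ l, (B₀ k l - (1 / (q : ℝ)) * ∑ m, B₀ m l) * z l = ν * z k) ∧
      |ν| = Real.sqrt (sSup {r : ℝ | ∃ x : Fin q → ℝ, x ≠ 0 ∧ (∑ k, x k * β k) = 0 ∧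
        r = (∑ k, ∑ l, x k * x l * (B₀ * B₀) k l * β k) / (∑ k, x k ^ 2 * β k)}) := by
  have hq0 : (0:ℝ) < q := by positivity
  set c : Fin q → ℝ := fun k => Real.sqrt (β k) with hc_def
  have hc : ∀ k, 0 < c k := fun k => Real.sqrt_pos.2 (hβpos k)
  have hc2 : ∀ k, c k * c k = β k := fun k => Real.mul_self_sqrt (hβpos k).le
  set M : Matrix (Fin q) (Fin q) ℝ := Matrix.of (fun k l => c k * B₀ k l / c l) with hM_def
  have hM_apply : ∀ k l, M k l = c k * B₀ k l / c l := fun k l => rfl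
  have hMsym : ∀ k l, M k l = M l k := by
    intro k l
    rw [hM_apply, hM_apply, div_eq_div_iff (hc l).ne' (hc k).ne']
    calc c k * B₀ k l * c k = (c k * c k) * B₀ k l := by ring
      _ = β k * B₀ k l := by rw [hc2]
      _ = β l * B₀ l k := hB₀rev k l
      _ = (c l * c l) * B₀ l k := by rw [hc2]
      _ = c l * B₀ l k * c l := by ring
  set M2 : Matrix (Fin q) (Fin q) ℝ := M * M with hM2_def
  have hM2_apply : ∀ k l, M2 k l = c k * (B₀ * B₀) k l / c l := by
    intro k l
    rw [hM2_def, Matrix.mul_apply, Matrix.mul_apply, Finset.mul_sum, Finset.sum_div]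
    refine Finset.sum_congr rfl fun m _ => ?_
    rw [hM_apply, hM_apply, div_mul_div_comm, div_eq_div_iff (mul_pos (hc m) (hc l)).ne' (hc l).ne']
    ring
  have hM2sym : ∀ k l, M2 k l = M2 l k := by
    intro k l
    rw [hM2_def, Matrix.mul_apply, Matrix.mul_apply]
    exact Finset.sum_congr rfl fun m _ => by rw [hMsym k m, hMsym m l]; ring
  have hM2mul : ∀ k l, M2 k l = ∑ m, M k m * M m l := fun k l => by
    rw [hM2_def, Matrix.mul_apply]
  have hMrow : ∀ k, ∑ l, M k l * c l = c k := by
    intro k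
    have : ∀ l, M k l * c l = c k * B₀ k l := by
      intro l; rw [hM_apply, div_mul_cancel₀ _ (hc l).ne']
    simp only [this, ← Finset.mul_sum, hB₀stoch, mul_one]
  have hM2row : ∀ k, ∑ l, M2 k l * c l = c k := by
    intro k
    have : ∀ l, M2 k l * c l = ∑ m, M k m * (M m l * c l) := by
      intro l
      rw [hM2_def, Matrix.mul_apply, Finset.sum_mul]
      exact Finset.sum_congr rfl fun m _ => by ring
    rw [Finset.sum_congr rfl fun l _ => this l, Finset.sum_comm]
    calc ∑ m, ∑ l, M k m * (M m l * c l) = ∑ m, M k m * ∑ l, M m l * c l := by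
          simp [Finset.mul_sum]
      _ = ∑ m, M k m * c m := by simp only [hMrow]
      _ = c k := hMrow k
  -- Euclidean space setup
  set u : EuclideanSpace ℝ (Fin q) := (WithLp.equiv 2 (Fin q → ℝ)).symm c with hu
  have hinner : ∀ z w : EuclideanSpace ℝ (Fin q), inner ℝ z w = ∑ k, z k * w k := by
    intro z w
    simp [PiLp.inner_apply, RCLike.inner_apply, mul_comm]
  have hzero : ∀ z : EuclideanSpace ℝ (Fin q), (∀ k, z k = 0) → z = 0 := by
    intro z h; exact PiLp.ext h
  set H : Submodule ℝ (EuclideanSpace ℝ (Fin q)) := (Submodule.span ℝ {u})ᗮ with hH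
  have hmem : ∀ z : EuclideanSpace ℝ (Fin q), z ∈ H ↔ ∑ k, c k * z k = 0 := by
    intro z
    rw [hH, Submodule.mem_orthogonal_singleton_iff_inner_right, hinner]
    exact Iff.rfl
  have hnorm : ∀ z : EuclideanSpace ℝ (Fin q), ‖z‖ ^ 2 = ∑ k, z k * z k := by
    intro z
    rw [← real_inner_self_eq_norm_sq, hinner]
  set Tfull := Matrix.toEuclideanLin M2 with hT_def
  have hTfull_apply : ∀ (z : EuclideanSpace ℝ (Fin q)) (k : Fin q),
      Tfull z k = ∑ l, M2 k l * z l := by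
    intro z k
    rw [hT_def, Matrix.toEuclideanLin_apply]
    simp [Matrix.mulVec, dotProduct]
  have hinv : ∀ z ∈ H, Tfull z ∈ H := by
    intro z hz
    rw [hmem] at hz ⊢
    calc ∑ k, c k * Tfull z k = ∑ k, ∑ l, c k * (M2 k l * z l) := by
          simp [hTfull_apply, Finset.mul_sum]
      _ = ∑ l, (∑ k, M2 l k * c k) * z l := by
          rw [Finset.sum_comm]
          refine Finset.sum_congr rfl fun l _ => ?_
          rw [Finset.sum_mul]
          refine Finset.sum_congr rfl fun k _ => ?_
          rw [hM2sym k l]; ring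
      _ = ∑ l, c l * z l := by simp only [hM2row]
      _ = 0 := hz
  -- restriction to H
  set T : H →ₗ[ℝ] H := Tfull.restrict hinv with hT'
  have hTcoe : ∀ x : H, ((T x : H) : EuclideanSpace ℝ (Fin q)) = Tfull x :=
    fun x => Tfull.restrict_coe_apply hinv x
  have hTsymfull : ∀ z w : EuclideanSpace ℝ (Fin q),
      (inner ℝ (Tfull z) w : ℝ) = inner ℝ z (Tfull w) := by
    intro z w
    rw [hinner, hinner]
    calc ∑ k, Tfull z k * w k = ∑ k, ∑ l, M2 k l * z l * w k := by
          simp [hTfull_apply, Finset.sum_mul]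
      _ = ∑ l, ∑ k, M2 k l * z l * w k := by rw [Finset.sum_comm]
      _ = ∑ l, z l * Tfull w l := by
          refine Finset.sum_congr rfl fun l _ => ?_
          rw [hTfull_apply, Finset.mul_sum]
          refine Finset.sum_congr rfl fun k _ => ?_
          rw [hM2sym k l]; ring
  have hTsym : T.IsSymmetric := by
    intro x y
    rw [Submodule.coe_inner, Submodule.coe_inner, hTcoe, hTcoe]
    exact hTsymfull _ _
  -- a nonzero element of H
  have h01 : (⟨0, by omega⟩ : Fin q) ≠ (⟨1, by omega⟩ : Fin q) := by
    intro h; simpa using congrArg Fin.val h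
  set i₀ : Fin q := ⟨0, by omega⟩
  set i₁ : Fin q := ⟨1, by omega⟩
  set zh : EuclideanSpace ℝ (Fin q) := (WithLp.equiv 2 (Fin q → ℝ)).symm
    (fun k => if k = i₀ then c i₀ * β i₁ else if k = i₁ then -(c i₁ * β i₀) else 0) with hzh
  have hzh_apply : ∀ k, zh k = if k = i₀ then c i₀ * β i₁ else
      if k = i₁ then -(c i₁ * β i₀) else 0 := fun k => rfl
  have hzh_mem : zh ∈ H := by
    rw [hmem]
    have : ∀ k, c k * zh k = (if k = i₀ then β i₀ * β i₁ else 0)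
        + (if k = i₁ then -(β i₁ * β i₀) else 0) := by
      intro k
      rw [hzh_apply]
      by_cases h0 : k = i₀
      · subst h0
        rw [if_pos rfl, if_pos rfl, if_neg h01, add_zero, ← mul_assoc, hc2]
      · rw [if_neg h0, if_neg h0, zero_add]
        by_cases h1 : k = i₁
        · subst h1
          rw [if_pos rfl, if_pos rfl, mul_neg, ← mul_assoc, hc2]
        · rw [if_neg h1, if_neg h1, mul_zero]
    rw [Finset.sum_congr rfl fun k _ => this k, Finset.sum_add_distrib]
    simp [Finset.sum_ite_eq']
    ring
  have hzh_ne : zh ≠ 0 := by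
    intro h
    have h0 : zh i₀ = 0 := by rw [h]; rfl
    rw [hzh_apply, if_pos rfl] at h0
    exact (mul_pos (hc i₀) (hβpos i₁)).ne' h0
  haveI : Nontrivial H := nontrivial_of_ne ⟨zh, hzh_mem⟩ 0
    (fun h => hzh_ne (congrArg Subtype.val h))
  set Rset : Set ℝ := {r : ℝ | ∃ x : Fin q → ℝ, x ≠ 0 ∧ (∑ k, x k * β k) = 0 ∧
    r = (∑ k, ∑ l, x k * x l * (B₀ * B₀) k l * β k) / (∑ k, x k ^ 2 * β k)} with hRset
  have hval : ∀ (x : Fin q → ℝ) (z : EuclideanSpace ℝ (Fin q)), (∀ k, z k = c k * x k) →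
      (∑ k, ∑ l, x k * x l * (B₀ * B₀) k l * β k) = (inner ℝ (Tfull z) z : ℝ) ∧
      (∑ k, x k ^ 2 * β k) = ‖z‖ ^ 2 := by
    intro x z hzx
    constructor
    · rw [hinner]
      calc ∑ k, ∑ l, x k * x l * (B₀ * B₀) k l * β k
          = ∑ k, ∑ l, M2 k l * z l * z k := by
            refine Finset.sum_congr rfl fun k _ => Finset.sum_congr rfl fun l _ => ?_
            rw [hzx k, hzx l, hM2_apply k l]
            have e : c k * (B₀ * B₀) k l / c l * (c l * x l) * (c k * x k)
                = (c k * c k) * (B₀ * B₀) k l * (x k * x l) * (c l / c l) := by ring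
            rw [e, div_self (hc l).ne', mul_one, hc2]
            ring
        _ = ∑ k, Tfull z k * z k := by
            refine Finset.sum_congr rfl fun k _ => ?_
            rw [hTfull_apply, Finset.sum_mul]
    · rw [hnorm]
      refine Finset.sum_congr rfl fun k _ => ?_
      rw [hzx k, ← hc2 k]
      ring
  have hrange : Set.range (fun x : {x : ↥H // x ≠ 0} =>
      RCLike.re (inner ℝ (T ↑x) (↑x : ↥H) : ℝ) / ‖((↑x : ↥H) : EuclideanSpace ℝ (Fin q))‖ ^ 2)
      = Rset := by
    ext r
    constructor
    · rintro ⟨x, rfl⟩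
      set z : EuclideanSpace ℝ (Fin q) := ((x : ↥H) : EuclideanSpace ℝ (Fin q)) with hzdef
      have hzH : z ∈ H := (x : ↥H).2
      have hzne : z ≠ 0 := fun h => x.2 (Subtype.ext h)
      set xv : Fin q → ℝ := fun k => z k / c k with hxv
      have hz : ∀ k, z k = c k * xv k := by
        intro k; rw [hxv]; rw [mul_comm, div_mul_cancel₀ _ (hc k).ne']
      obtain ⟨hnum, hden⟩ := hval xv z hz
      refine ⟨xv, ?_, ?_, ?_⟩
      · intro h
        exact hzne (hzero z fun k => by rw [hz k, h]; simp)
      · have h0 : ∑ k, c k * z k = 0 := (hmem z).1 hzH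
        rw [← h0]
        refine Finset.sum_congr rfl fun k _ => ?_
        rw [hz k, ← hc2 k]; ring
      · rw [hnum, hden]
        simp only [Submodule.coe_inner, hTcoe]
        rfl
    · rintro ⟨x, hxne, hmean, rfl⟩
      set z : EuclideanSpace ℝ (Fin q) := (WithLp.equiv 2 (Fin q → ℝ)).symm
        (fun k => c k * x k) with hzdef
      have hz : ∀ k, z k = c k * x k := fun k => rfl
      have hzH : z ∈ H := by
        rw [hmem]
        rw [← hmean]
        refine Finset.sum_congr rfl fun k _ => ?_
        rw [hz k, ← hc2 k]; ring
      have hzne : z ≠ 0 := by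
        intro h
        refine hxne (funext fun k => ?_)
        have hk : z k = 0 := by rw [h]; rfl
        rw [hz k] at hk
        exact (mul_eq_zero.1 hk).resolve_left (hc k).ne'
      obtain ⟨hnum, hden⟩ := hval x z hz
      refine ⟨⟨⟨z, hzH⟩, fun h => hzne (congrArg Subtype.val h)⟩, ?_⟩
      rw [hnum, hden]
      simp only [Submodule.coe_inner, hTcoe]
      rfl
  -- the top eigenvalue of T
  have heigT : Module.End.HasEigenvalue T ((sSup Rset : ℝ) : ℝ) := by
    have h := LinearMap.IsSymmetric.hasEigenvalue_iSup_of_finiteDimensional hTsym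
    have h2 : Set.range (fun x : {x : ↥H // x ≠ 0} =>
        RCLike.re (inner ℝ (T ↑x) (↑x : ↥H) : ℝ) / ‖(↑x : ↥H)‖ ^ 2) = Rset := by
      rw [← hrange]
      rfl
    rwa [iSup, h2] at h
  obtain ⟨x₀, hx₀⟩ := heigT.exists_hasEigenvector
  obtain ⟨hx₀mem, hx₀ne⟩ := Module.End.hasEigenvector_iff.1 hx₀
  rw [Module.End.mem_eigenspace_iff] at hx₀mem
  set s : ℝ := sSup Rset with hs_def
  set z₀ : EuclideanSpace ℝ (Fin q) := (x₀ : EuclideanSpace ℝ (Fin q)) with hz₀def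
  have hz₀H : z₀ ∈ H := x₀.2
  have hz₀ne : z₀ ≠ 0 := fun h => hx₀ne (Subtype.ext h)
  have hTz₀full : Tfull z₀ = s • z₀ := by
    have := congrArg (Subtype.val) hx₀mem
    rw [hTcoe] at this
    exact this
  have hTz₀ : ∀ k, ∑ l, M2 k l * z₀ l = s * z₀ k := by
    intro k
    have := congrFun (congrArg (fun v : EuclideanSpace ℝ (Fin q) => (v : Fin q → ℝ)) hTz₀full) k
    rw [← hTfull_apply z₀ k]
    exact this
  have hz₀sum_pos : 0 < ∑ k, z₀ k * z₀ k := by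
    have hne : ∃ k, z₀ k ≠ 0 := by
      by_contra h
      push_neg at h
      exact hz₀ne (hzero z₀ h)
    obtain ⟨k0, hk0⟩ := hne
    exact Finset.sum_pos' (fun k _ => mul_self_nonneg _)
      ⟨k0, Finset.mem_univ _, mul_self_pos.2 hk0⟩
  set w₀ : Fin q → ℝ := fun m => ∑ k, M m k * z₀ k with hw₀
  have hquad : ∑ k, (∑ l, M2 k l * z₀ l) * z₀ k = ∑ m, w₀ m * w₀ m := by
    calc ∑ k, (∑ l, M2 k l * z₀ l) * z₀ k
        = ∑ k, ∑ l, ∑ m, (M m k * z₀ k) * (M m l * z₀ l) := by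
          refine Finset.sum_congr rfl fun k _ => ?_
          rw [Finset.sum_mul]
          refine Finset.sum_congr rfl fun l _ => ?_
          rw [hM2mul, Finset.sum_mul, Finset.sum_mul]
          refine Finset.sum_congr rfl fun m _ => ?_
          rw [hMsym k m]
          ring
      _ = ∑ k, ∑ m, ∑ l, (M m k * z₀ k) * (M m l * z₀ l) :=
          Finset.sum_congr rfl fun k _ => Finset.sum_comm
      _ = ∑ m, ∑ k, ∑ l, (M m k * z₀ k) * (M m l * z₀ l) := Finset.sum_comm
      _ = ∑ m, w₀ m * w₀ m := by
          refine Finset.sum_congr rfl fun m _ => ?_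
          rw [hw₀]
          rw [Finset.sum_mul_sum]
  have hs_nonneg : 0 ≤ s := by
    have h1 : ∑ k, (∑ l, M2 k l * z₀ l) * z₀ k = s * ∑ k, z₀ k * z₀ k := by
      rw [Finset.mul_sum]
      refine Finset.sum_congr rfl fun k _ => ?_
      rw [hTz₀ k]
      ring
    have h2 : 0 ≤ ∑ m, w₀ m * w₀ m := Finset.sum_nonneg fun m _ => mul_self_nonneg _
    nlinarith [hz₀sum_pos]
  set ν : ℝ := Real.sqrt s with hν
  have hν2 : ν * ν = s := Real.mul_self_sqrt hs_nonneg
  have hν_nonneg : 0 ≤ ν := Real.sqrt_nonneg s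
  -- orthogonality of M-images
  have hMorth : ∀ y : Fin q → ℝ, (∑ k, c k * y k = 0) →
      ∑ k, c k * (∑ l, M k l * y l) = 0 := by
    intro y hy
    calc ∑ k, c k * (∑ l, M k l * y l) = ∑ k, ∑ l, c k * (M k l * y l) := by
          simp [Finset.mul_sum]
      _ = ∑ l, (∑ k, M l k * c k) * y l := by
          rw [Finset.sum_comm]
          refine Finset.sum_congr rfl fun l _ => ?_
          rw [Finset.sum_mul]
          refine Finset.sum_congr rfl fun k _ => ?_
          rw [hMsym k l]
          ring
      _ = ∑ l, c l * y l := by simp only [hMrow]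
      _ = 0 := hy
  have hz₀orth : ∑ k, c k * z₀ k = 0 := (hmem z₀).1 hz₀H
  -- extract an eigenvector of M itself
  obtain ⟨ν₁, y, hy_ne, hy_eig, hy_orth, hν₁⟩ :
      ∃ (ν₁ : ℝ) (y : Fin q → ℝ), y ≠ 0 ∧ (∀ k, ∑ l, M k l * y l = ν₁ * y k) ∧
        (∑ k, c k * y k = 0) ∧ |ν₁| = ν := by
    set wf : Fin q → ℝ := fun k => (∑ l, M k l * z₀ l) + ν * z₀ k with hwf
    by_cases hw0 : wf = 0
    · refine ⟨-ν, fun k => z₀ k, ?_, ?_, hz₀orth, ?_⟩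
      · intro h
        exact hz₀ne (hzero z₀ fun k => congrFun h k)
      · intro k
        have := congrFun hw0 k
        simp only [hwf, Pi.zero_apply] at this
        linarith [this]
      · rw [abs_neg, abs_of_nonneg hν_nonneg]
    · refine ⟨ν, wf, hw0, ?_, ?_, abs_of_nonneg hν_nonneg⟩
      · intro k
        have hMM : ∑ l, M k l * (∑ m, M l m * z₀ m) = ∑ m, M2 k m * z₀ m := by
          calc ∑ l, M k l * (∑ m, M l m * z₀ m)
              = ∑ l, ∑ m, M k l * (M l m * z₀ m) := by simp [Finset.mul_sum]
            _ = ∑ m, ∑ l, M k l * (M l m * z₀ m) := Finset.sum_comm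
            _ = ∑ m, M2 k m * z₀ m := by
                refine Finset.sum_congr rfl fun m _ => ?_
                rw [hM2mul, Finset.sum_mul]
                refine Finset.sum_congr rfl fun l _ => ?_
                ring
        calc ∑ l, M k l * wf l
            = (∑ l, M k l * (∑ m, M l m * z₀ m)) + ν * ∑ l, M k l * z₀ l := by
              rw [hwf]
              simp only [mul_add, Finset.sum_add_distrib, Finset.mul_sum]
              congr 1
              refine Finset.sum_congr rfl fun l _ => ?_
              ring
          _ = s * z₀ k + ν * ∑ l, M k l * z₀ l := by rw [hMM, hTz₀ k]
          _ = ν * wf k := by rw [hwf, ← hν2]; ring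
      · rw [hwf]
        simp only [mul_add, Finset.sum_add_distrib]
        rw [hMorth z₀ hz₀orth]
        have : ∑ k, c k * (ν * z₀ k) = ν * ∑ k, c k * z₀ k := by
          rw [Finset.mul_sum]
          exact Finset.sum_congr rfl fun k _ => by ring
        rw [this, hz₀orth, mul_zero, zero_add]
  -- transform back to an eigenvector of B₀
  set xp : Fin q → ℝ := fun k => y k / c k with hxp
  have hy_of_xp : ∀ k, y k = c k * xp k := by
    intro k
    rw [hxp, mul_comm, div_mul_cancel₀ _ (hc k).ne']
  have hxp_eig : ∀ k, ∑ l, B₀ k l * xp l = ν₁ * xp k := by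
    intro k
    have h1 : ∑ l, B₀ k l * xp l = (∑ l, M k l * y l) / c k := by
      rw [Finset.sum_div]
      refine Finset.sum_congr rfl fun l _ => ?_
      rw [hM_apply, hy_of_xp l]
      have e : c k * B₀ k l / c l * (c l * xp l) / c k
          = B₀ k l * xp l * (c l / c l) * (c k / c k) := by ring
      rw [e, div_self (hc l).ne', div_self (hc k).ne', mul_one, mul_one]
    rw [h1, hy_eig k, hxp]
    ring
  have hxp_mean : ∑ k, xp k * β k = 0 := by
    rw [← hy_orth]
    refine Finset.sum_congr rfl fun k _ => ?_
    rw [hy_of_xp k, ← hc2 k]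
    ring
  have hxp_ne : xp ≠ 0 := by
    intro h
    refine hy_ne (funext fun k => ?_)
    have hk := congrFun h k
    simp only [Pi.zero_apply] at hk
    rw [hy_of_xp k, hk, mul_zero]
    rfl
  -- subtract the uniform mean
  set xb : ℝ := (∑ k, xp k) / q with hxb
  have hxb_sum : ∑ k, xp k = q * xb := by
    rw [hxb, mul_div_cancel₀ _ hq0.ne']
  refine ⟨ν₁, fun k => xp k - xb, ?_, ?_, ?_⟩
  · intro h
    have hconst : ∀ k, xp k = xb := fun k => by
      have := congrFun h k
      simp only [Pi.zero_apply] at this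
      linarith
    have h0 : ∑ k, xp k * β k = xb := by
      rw [Finset.sum_congr rfl fun k _ => by rw [hconst k], ← Finset.mul_sum, hβsum, mul_one]
    rw [hxp_mean] at h0
    exact hxp_ne (funext fun k => by rw [hconst k, ← h0]; rfl)
  · intro k
    have hA : ∀ j, ∑ l, B₀ j l * (xp l - xb) = ν₁ * xp j - xb := by
      intro j
      have e : ∀ l, B₀ j l * (xp l - xb) = B₀ j l * xp l - xb * B₀ j l := fun l => by ring
      rw [Finset.sum_congr rfl fun l _ => e l, Finset.sum_sub_distrib, ← Finset.mul_sum,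
        hB₀stoch j, mul_one, hxp_eig j]
    have hB : ∑ l, (∑ m, B₀ m l) * (xp l - xb) = ν₁ * (q * xb) - q * xb := by
      calc ∑ l, (∑ m, B₀ m l) * (xp l - xb)
          = ∑ l, ∑ m, B₀ m l * (xp l - xb) := by
            refine Finset.sum_congr rfl fun l _ => ?_
            rw [Finset.sum_mul]
        _ = ∑ m, ∑ l, B₀ m l * (xp l - xb) := Finset.sum_comm
        _ = ∑ m : Fin q, (ν₁ * xp m - xb) := Finset.sum_congr rfl fun m _ => hA m
        _ = ν₁ * (q * xb) - q * xb := by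
            rw [Finset.sum_sub_distrib, ← Finset.mul_sum, hxb_sum]
            simp [Finset.card_univ]
    calc ∑ l, (B₀ k l - (1 / (q : ℝ)) * ∑ m, B₀ m l) * (xp l - xb)
        = (∑ l, B₀ k l * (xp l - xb))
          - (1 / (q : ℝ)) * ∑ l, (∑ m, B₀ m l) * (xp l - xb) := by
          rw [Finset.mul_sum, ← Finset.sum_sub_distrib]
          refine Finset.sum_congr rfl fun l _ => ?_
          ring
      _ = (ν₁ * xp k - xb) - (1 / (q : ℝ)) * (ν₁ * (q * xb) - q * xb) := by rw [hA k, hB]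
      _ = ν₁ * (xp k - xb) := by
          field_simp
          ring
  · exact hν₁
/-- Necessity of `λ₁ μ₂ ≤ 1` in the homogeneous case: if all single-variable beliefs equal
a common `β`, all conditional-belief matrices equal a common row-stochastic `B₀` reversible
w.r.t. `β`, and every complex eigenvalue of `J̃` has modulus `< 1` (local stability), then
`λ₁ · μ₂ ≤ 1` where `μ₂ = √(μ₂ of K = B₀B₀)`. -/
theorem homogeneous_stability_necessary_condition
    (q : ℕ) (hq : 2 ≤ q) (S : F → Finset V) (hcard : ∀ a, 2 ≤ (S a).card)
    (bv : V → Fin q → ℝ) (bf : ∀ a : F, Config S q a → ℝ)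
    (hbv : ∀ i x, 0 < bv i x) (hbf : ∀ a y, 0 < bf a y)
    (hsumv : ∀ i, ∑ x, bv i x = 1)
    (hsumf : ∀ a, ∑ y : Config S q a, bf a y = 1)
    (hcompat : ∀ a i (hi : i ∈ S a) (k : Fin q),
      ∑ y ∈ univ.filter (fun y : Config S q a => y ⟨i, hi⟩ = k), bf a y = bv i k)
    -- homogeneity
    (β : Fin q → ℝ) (hβpos : ∀ k, 0 < β k) (hβsum : ∑ k, β k = 1)
    (hhomv : ∀ i : V, bv i = β)
    (B₀ : Matrix (Fin q) (Fin q) ℝ)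
    (hB₀stoch : ∀ k, ∑ l, B₀ k l = 1)
    (hB₀rev : ∀ k l, β k * B₀ k l = β l * B₀ l k)
    (hhomB : ∀ (a : F) (i j : V), i ∈ S a → j ∈ S a → i ≠ j →
      Bmat S bv bf a i j = B₀)
    -- the line graph has at least one pair of distinct edges with A-entry 1
    (hadj : ∃ e e' : F × V, Amat S e e' = 1) :
    -- local stability implies λ₁ μ₂ ≤ 1
    (∀ μ : ℂ, IsEigenvalue (Jtilde S bv bf) μ → ‖μ‖ < 1) →
      specRad (Amat S) *
        Real.sqrt (sSup {r : ℝ | ∃ x : Fin q → ℝ, x ≠ 0 ∧ (∑ k, x k * β k) = 0 ∧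
          r = (∑ k, ∑ l, x k * x l * (B₀ * B₀) k l * β k) / (∑ k, x k ^ 2 * β k)})
        ≤ 1 := by
  intro hstab
  obtain ⟨ν₁, z, hzne, hP, hν₁⟩ := exists_eigen_P q hq β hβpos hβsum B₀ hB₀stoch hB₀rev
  rw [← hν₁]
  by_cases hν0 : ν₁ = 0
  · rw [hν0, abs_zero, mul_zero]
    exact zero_le_one
  have hν₁pos : 0 < |ν₁| := abs_pos.2 hν0
  have hAcol : ∀ e e' : F × V, e'.2 ∉ S e'.1 → Amat S e e' = 0 := by
    intro e e' h
    simp only [Amat, Matrix.of_apply]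
    rw [if_neg]
    intro hcond
    exact h hcond.2.1
  have hmain : specRad (Amat S) ≤ 1 / |ν₁| := by
    have hspec : specRad (Amat S) = sSup {r : ℝ | ∃ μ : ℂ,
        IsEigenvalue (Amat S) μ ∧ r = ‖μ‖} := rfl
    rw [hspec]
    refine Real.sSup_le ?_ (by positivity)
    rintro r ⟨μ, hμ, rfl⟩
    have hkey : ‖μ‖ * |ν₁| < 1 := by
      by_cases hμ0 : μ = 0
      · rw [hμ0, norm_zero, zero_mul]
        exact zero_lt_one
      obtain ⟨wA, hwAne, hwAeq⟩ := hμ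
      set Jc := (Jtilde S bv bf).map (fun t : ℝ => (t : ℂ)) with hJc
      set v₀ : (F × V) × Fin q → ℂ :=
        fun p => if p.1.2 ∈ S p.1.1 then wA p.1 * (z p.2 : ℂ) else 0 with hv₀def
      have hJcol : ∀ p p' : (F × V) × Fin q, p'.1.2 ∉ S p'.1.1 → Jc p p' = 0 := by
        intro p p' h
        simp only [hJc, Matrix.map_apply, Jtilde, Matrix.of_apply]
        rw [hAcol p.1 p'.1 h, mul_zero]
        exact Complex.ofReal_zero
      have hgood : ∀ p : (F × V) × Fin q, p.1.2 ∈ S p.1.1 →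
          Jc.mulVec v₀ p = (μ * (ν₁ : ℂ)) * v₀ p := by
        intro p hp
        have hrow : ∀ e' : F × V, ∑ l, Jc p (e', l) * v₀ (e', l)
            = ((Amat S p.1 e' : ℝ) : ℂ) * wA e' * ((ν₁ : ℂ) * (z p.2 : ℂ)) := by
          intro e'
          by_cases hcnd : e'.2 ∈ S p.1.1 ∧ e'.2 ∈ S e'.1 ∧ e'.2 ≠ p.1.2 ∧ e'.1 ≠ p.1.1
          · have hA1 : Amat S p.1 e' = 1 := by
              simp only [Amat, Matrix.of_apply]
              rw [if_pos hcnd]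
            have hB : Bmat S bv bf p.1.1 p.1.2 e'.2 = B₀ :=
              hhomB p.1.1 p.1.2 e'.2 hp hcnd.1 (Ne.symm hcnd.2.2.1)
            have hPz : ((∑ l, (B₀ p.2 l - (1 / (q : ℝ)) * ∑ m, B₀ m l) * z l : ℝ) : ℂ)
                = (ν₁ : ℂ) * (z p.2 : ℂ) := by
              rw [hP p.2]
              push_cast
              ring
            calc ∑ l, Jc p (e', l) * v₀ (e', l)
                = ∑ l, ((B₀ p.2 l - (1 / (q : ℝ)) * ∑ m, B₀ m l : ℝ) : ℂ)
                    * (wA e' * (z l : ℂ)) := by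
                  refine Finset.sum_congr rfl fun l _ => ?_
                  simp only [hJc, Matrix.map_apply, Jtilde, Matrix.of_apply, hv₀def]
                  rw [hA1, hB, if_pos hcnd.2.1, mul_one]
              _ = wA e' * ((∑ l, (B₀ p.2 l - (1 / (q : ℝ)) * ∑ m, B₀ m l) * z l : ℝ) : ℂ) := by
                  push_cast
                  rw [Finset.mul_sum]
                  exact Finset.sum_congr rfl fun l _ => by ring
              _ = ((Amat S p.1 e' : ℝ) : ℂ) * wA e' * ((ν₁ : ℂ) * (z p.2 : ℂ)) := by
                  rw [hPz, hA1]
                  push_cast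
                  ring
          · have hA0 : Amat S p.1 e' = 0 := by
              simp only [Amat, Matrix.of_apply]
              rw [if_neg hcnd]
            have hL : ∑ l, Jc p (e', l) * v₀ (e', l) = 0 := by
              refine Finset.sum_eq_zero fun l _ => ?_
              simp only [hJc, Matrix.map_apply, Jtilde, Matrix.of_apply]
              rw [hA0, mul_zero, Complex.ofReal_zero, zero_mul]
            rw [hL, hA0, Complex.ofReal_zero, zero_mul, zero_mul]
        calc Jc.mulVec v₀ p = ∑ p' : (F × V) × Fin q, Jc p p' * v₀ p' := rfl
          _ = ∑ e' : F × V, ∑ l, Jc p (e', l) * v₀ (e', l) := Fintype.sum_prod_type _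
          _ = ∑ e' : F × V, ((Amat S p.1 e' : ℝ) : ℂ) * wA e' * ((ν₁ : ℂ) * (z p.2 : ℂ)) :=
              Finset.sum_congr rfl fun e' _ => hrow e'
          _ = (∑ e' : F × V, ((Amat S p.1 e' : ℝ) : ℂ) * wA e') * ((ν₁ : ℂ) * (z p.2 : ℂ)) := by
              rw [Finset.sum_mul]
          _ = (μ * (ν₁ : ℂ)) * v₀ p := by
              have hAw : ∑ e' : F × V, ((Amat S p.1 e' : ℝ) : ℂ) * wA e' = μ * wA p.1 := by
                have := congrFun hwAeq p.1
                calc ∑ e' : F × V, ((Amat S p.1 e' : ℝ) : ℂ) * wA e'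
                    = ((Amat S).map (fun t : ℝ => (t : ℂ))).mulVec wA p.1 := rfl
                  _ = (μ • wA) p.1 := this
                  _ = μ * wA p.1 := rfl
              rw [hAw, hv₀def]
              simp only [if_pos hp]
              ring
      set v : (F × V) × Fin q → ℂ := Jc.mulVec v₀ with hv
      have hveq : Jc.mulVec v = (μ * (ν₁ : ℂ)) • v := by
        funext p
        have hterm : ∀ p' : (F × V) × Fin q,
            Jc p p' * v p' = Jc p p' * ((μ * (ν₁ : ℂ)) * v₀ p') := by
          intro p'
          by_cases hg : p'.1.2 ∈ S p'.1.1
          · rw [hgood p' hg]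
          · rw [hJcol p p' hg, zero_mul, zero_mul]
        calc Jc.mulVec v p = ∑ p', Jc p p' * v p' := rfl
          _ = ∑ p', Jc p p' * ((μ * (ν₁ : ℂ)) * v₀ p') :=
              Finset.sum_congr rfl fun p' _ => hterm p'
          _ = (μ * (ν₁ : ℂ)) * ∑ p', Jc p p' * v₀ p' := by
              rw [Finset.mul_sum]
              exact Finset.sum_congr rfl fun p' _ => by ring
          _ = ((μ * (ν₁ : ℂ)) • v) p := rfl
      have hgoodco : ∃ e : F × V, e.2 ∈ S e.1 ∧ wA e ≠ 0 := by
        by_contra hno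
        push_neg at hno
        have h0 : ((Amat S).map (fun t : ℝ => (t : ℂ))).mulVec wA = 0 := by
          funext e
          have hterm : ∀ e' : F × V,
              ((Amat S).map (fun t : ℝ => (t : ℂ))) e e' * wA e' = 0 := by
            intro e'
            by_cases hg : e'.2 ∈ S e'.1
            · rw [hno e' hg, mul_zero]
            · simp only [Matrix.map_apply, hAcol e e' hg]
              rw [Complex.ofReal_zero, zero_mul]
          calc ((Amat S).map (fun t : ℝ => (t : ℂ))).mulVec wA e
              = ∑ e', ((Amat S).map (fun t : ℝ => (t : ℂ))) e e' * wA e' := rfl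
            _ = 0 := Finset.sum_eq_zero fun e' _ => hterm e'
        rw [hwAeq] at h0
        rcases smul_eq_zero.1 h0 with h | h
        · exact hμ0 h
        · exact hwAne h
      obtain ⟨e₀, he₀S, he₀w⟩ := hgoodco
      obtain ⟨k₀, hk₀⟩ : ∃ k, z k ≠ 0 := by
        by_contra h
        push_neg at h
        exact hzne (funext h)
      have hθ : (μ * (ν₁ : ℂ)) ≠ 0 := mul_ne_zero hμ0 (Complex.ofReal_ne_zero.2 hν0)
      have hvne : v ≠ 0 := by
        intro h
        have h1 : v (e₀, k₀) = 0 := by rw [h]; rfl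
        have h2 : v (e₀, k₀) = (μ * (ν₁ : ℂ)) * v₀ (e₀, k₀) := hgood (e₀, k₀) he₀S
        have hv₀ne : v₀ (e₀, k₀) ≠ 0 := by
          simp only [hv₀def, if_pos he₀S]
          exact mul_ne_zero he₀w (Complex.ofReal_ne_zero.2 hk₀)
        exact mul_ne_zero hθ hv₀ne (h2 ▸ h1)
      have habs := hstab (μ * (ν₁ : ℂ)) ⟨v, hvne, hveq⟩
      rwa [norm_mul, Complex.norm_real, Real.norm_eq_abs] at habs
    have := (lt_div_iff₀ hν₁pos).2 hkey
    exact this.le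
  calc specRad (Amat S) * |ν₁| ≤ (1 / |ν₁|) * |ν₁| :=
      mul_le_mul_of_nonneg_right hmain (abs_nonneg _)
    _ = 1 := by field_simp
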